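/- Let γ : I → S² be a C² unit-speed curve with det(γ, γ', γ'') nonvanishing on a compact interval I. Then there exist r > 0 and constants 0 < c ≤ C such that for all θ, θ' ∈ I with |θ − θ'| ≤ r: c|θ−θ'|² ≤ |⟨(γ × γ')(θ), γ(θ')⟩| ≤ C|θ−θ'|². -/

import Mathlib

open MeasureTheory Metric Set Filter
open scoped ENNReal NNReal RealInnerProductSpace

noncomputable section

abbrev E3 : Type := EuclideanSpace ℝ (Fin 3)

/-- Cross product of two vectors in `ℝ³`. -/
def cross3 (u v : E3) : E3 :=
  WithLp.toLp 2 ![u 1 * v 2 - u 2 * v 1, u 2 * v 0 - u 0 * v 2, u 0 * v 1 - u 1 * v 0]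

/-- Scalar triple product `det(u, v, w)`. -/
def det3 (u v w : E3) : ℝ := ⟪u, cross3 v w⟫

lemma inner_cross_left (u v : E3) : ⟪cross3 u v, u⟫ = 0 := by
  simp [cross3, PiLp.inner_apply, Fin.sum_univ_three]; ring

lemma inner_cross_right (u v : E3) : ⟪cross3 u v, v⟫ = 0 := by
  simp [cross3, PiLp.inner_apply, Fin.sum_univ_three]; ring

lemma inner_cross_eq_det3 (u v w : E3) : ⟪cross3 u v, w⟫ = det3 u v w := by
  simp [cross3, det3, PiLp.inner_apply, Fin.sum_univ_three]; ring

lemma cross3_continuous {α : Type*} [TopologicalSpace α] {f g : α → E3}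
    (hf : Continuous f) (hg : Continuous g) : Continuous fun x => cross3 (f x) (g x) := by
  have hfi : ∀ i, Continuous fun x => f x i := fun i => by fun_prop
  have hgi : ∀ i, Continuous fun x => g x i := fun i => by fun_prop
  unfold cross3
  apply (PiLp.continuous_toLp 2 (fun _ : Fin 3 => ℝ)).comp
  apply continuous_pi
  intro i
  fin_cases i <;> simp <;> fun_prop

lemma taylor2 {g : ℝ → ℝ} (hg : ContDiff ℝ 2 g) {x y : ℝ} (hxy : x ≠ y) :
    ∃ ξ ∈ Ioo (min x y) (max x y),
      g y - g x - deriv g x * (y - x) = deriv (deriv g) ξ / 2 * (y - x) ^ 2 := by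
  have hgd : Differentiable ℝ g := hg.differentiable (by norm_num)
  have hg' : ContDiff ℝ 1 (deriv g) :=
    (contDiff_succ_iff_deriv.mp (show ContDiff ℝ ((1:ℕ)+1) g by exact_mod_cast hg)).2.2
  have hg'd : Differentiable ℝ (deriv g) := hg'.differentiable one_ne_zero
  have hyx : (y - x) ^ 2 ≠ 0 := pow_ne_zero _ (sub_ne_zero.mpr (Ne.symm hxy))
  set K : ℝ := (g y - g x - deriv g x * (y - x)) / (y - x) ^ 2 with hK
  set F : ℝ → ℝ := fun s => g s - g x - deriv g x * (s - x) - K * (s - x) ^ 2 with hF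
  set G : ℝ → ℝ := fun s => deriv g s - deriv g x - K * (2 * (s - x)) with hG
  have hFd : ∀ s, HasDerivAt F (G s) s := by
    intro s
    have hq : HasDerivAt (fun s : ℝ => (s - x) ^ 2) (2 * (s - x)) s := by
      have := ((hasDerivAt_id s).sub_const x).pow 2
      simp only [Pi.pow_def] at this
      simpa using this
    have h1 : HasDerivAt (fun s => deriv g x * (s - x)) (deriv g x * 1) s :=
      ((hasDerivAt_id s).sub_const x).const_mul _
    have := (((hgd s).hasDerivAt.sub_const (g x)).sub h1).sub (hq.const_mul K)
    simp only [Pi.sub_def] at this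
    simpa [G, mul_comm] using this
  have hGd : ∀ s, HasDerivAt G (deriv (deriv g) s - K * 2) s := by
    intro s
    have h1 : HasDerivAt (fun s => K * (2 * (s - x))) (K * 2) s := by
      have := (((hasDerivAt_id s).sub_const x).const_mul (2:ℝ)).const_mul K
      simpa using this
    exact ((hg'd s).hasDerivAt.sub_const _).sub h1
  have hFderiv : deriv F = G := funext fun s => (hFd s).deriv
  have hFx : F x = 0 := by simp [F]
  have hFy : F y = 0 := by
    simp only [F, hK]
    field_simp
    ring
  have hGx : G x = 0 := by simp [G]
  have key : ∀ ξ, deriv G ξ = 0 → deriv (deriv g) ξ = 2 * K := by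
    intro ξ h
    have := (hGd ξ).deriv
    rw [h] at this
    linarith
  have final : ∀ ξ, deriv (deriv g) ξ = 2 * K →
      g y - g x - deriv g x * (y - x) = deriv (deriv g) ξ / 2 * (y - x) ^ 2 := by
    intro ξ h
    rw [h, hK]
    field_simp
  have hFc : Continuous F := Differentiable.continuous (fun s => (hFd s).differentiableAt)
  have hGc : Continuous G := Differentiable.continuous (fun s => (hGd s).differentiableAt)
  rcases hxy.lt_or_gt with h | h
  · obtain ⟨ξ₁, hξ₁, hdF⟩ := exists_deriv_eq_zero h hFc.continuousOn (hFx.trans hFy.symm)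
    rw [hFderiv] at hdF
    obtain ⟨ξ, hξ, hdG⟩ := exists_deriv_eq_zero hξ₁.1 hGc.continuousOn (hGx.trans hdF.symm)
    refine ⟨ξ, ⟨?_, ?_⟩, final ξ (key ξ hdG)⟩
    · simp only [min_eq_left h.le]; exact hξ.1
    · simp only [max_eq_right h.le]; exact hξ.2.trans hξ₁.2
  · obtain ⟨ξ₁, hξ₁, hdF⟩ := exists_deriv_eq_zero h hFc.continuousOn (hFy.trans hFx.symm)
    rw [hFderiv] at hdF
    obtain ⟨ξ, hξ, hdG⟩ := exists_deriv_eq_zero hξ₁.2 hGc.continuousOn (hdF.trans hGx.symm)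
    refine ⟨ξ, ⟨?_, ?_⟩, final ξ (key ξ hdG)⟩
    · simp only [min_eq_right h.le]; exact hξ₁.1.trans hξ.1
    · simp only [max_eq_left h.le]; exact hξ.2

/-- Quadratic two-sided Taylor bound: for a `C²` unit-speed curve `γ : I → S²` with
`det(γ,γ',γ'')` nonvanishing on a compact interval `I`, there are `r > 0` and
`0 < c ≤ C` with `c|θ−θ'|² ≤ |⟨(γ×γ')(θ), γ(θ')⟩| ≤ C|θ−θ'|²` for `θ, θ' ∈ I`,
`|θ−θ'| ≤ r`. -/
theorem stmt8 (a b : ℝ) (hab : a ≤ b) (γ : ℝ → E3)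
    (hγ : ContDiff ℝ 2 γ)
    (hsphere : ∀ θ ∈ Icc a b, ‖γ θ‖ = 1)
    (hunit : ∀ θ ∈ Icc a b, ‖deriv γ θ‖ = 1)
    (hdet : ∀ θ ∈ Icc a b, det3 (γ θ) (deriv γ θ) (deriv (deriv γ) θ) ≠ 0) :
    ∃ r > (0 : ℝ), ∃ c C : ℝ, 0 < c ∧ c ≤ C ∧
      ∀ θ ∈ Icc a b, ∀ θ' ∈ Icc a b, |θ - θ'| ≤ r →
        c * |θ - θ'| ^ 2 ≤ |⟪cross3 (γ θ) (deriv γ θ), γ θ'⟫| ∧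
        |⟪cross3 (γ θ) (deriv γ θ), γ θ'⟫| ≤ C * |θ - θ'| ^ 2 := by
  have hγd : Differentiable ℝ γ := hγ.differentiable (by norm_num)
  have hγ' : ContDiff ℝ 1 (deriv γ) :=
    (contDiff_succ_iff_deriv.mp (show ContDiff ℝ ((1:ℕ)+1) γ by exact_mod_cast hγ)).2.2
  have hγ'd : Differentiable ℝ (deriv γ) := hγ'.differentiable one_ne_zero
  have hγ''c : Continuous (deriv (deriv γ)) :=
    ((contDiff_succ_iff_deriv.mp
      (show ContDiff ℝ ((0:ℕ)+1) (deriv γ) by exact_mod_cast hγ')).2.2).continuous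
  set n : ℝ → E3 := fun θ => cross3 (γ θ) (deriv γ θ) with hn
  have hncont : Continuous n := cross3_continuous hγd.continuous hγ'd.continuous
  set h : ℝ × ℝ → ℝ := fun p => ⟪n p.1, deriv (deriv γ) p.2⟫ with hh
  have hhcont : Continuous h :=
    continuous_inner.comp ((hncont.comp continuous_fst).prodMk (hγ''c.comp continuous_snd))
  have hdiag : ∀ θ ∈ Icc a b, h (θ, θ) ≠ 0 := by
    intro θ hθ
    have := hdet θ hθ
    show ⟪cross3 (γ θ) (deriv γ θ), deriv (deriv γ) θ⟫ ≠ 0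
    rw [inner_cross_eq_det3]
    exact this
  have hcpt : IsCompact (Icc a b) := isCompact_Icc
  have hne : (Icc a b).Nonempty := nonempty_Icc.mpr hab
  obtain ⟨θ₀, hθ₀, hmin⟩ := hcpt.exists_isMinOn hne
    ((hhcont.comp (continuous_id.prodMk continuous_id)).abs.continuousOn)
  set m : ℝ := |h (θ₀, θ₀)| with hm
  have hmpos : 0 < m := abs_pos.mpr (hdiag θ₀ hθ₀)
  have hmle : ∀ θ ∈ Icc a b, m ≤ |h (θ, θ)| := fun θ hθ => hmin hθ
  set Kset : Set (ℝ × ℝ) := Icc a b ×ˢ Icc a b with hKset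
  have hKc : IsCompact Kset := hcpt.prod hcpt
  have hKne : Kset.Nonempty := ⟨(θ₀, θ₀), ⟨hθ₀, hθ₀⟩⟩
  obtain ⟨p₀, hp₀, hmax⟩ := hKc.exists_isMaxOn hKne hhcont.abs.continuousOn
  set M : ℝ := |h p₀| with hM
  have hMle : ∀ p ∈ Kset, |h p| ≤ M := fun p hp => hmax hp
  have hmM : m ≤ M := (hmle θ₀ hθ₀).trans (hMle (θ₀, θ₀) ⟨hθ₀, hθ₀⟩)
  have huc := hKc.uniformContinuousOn_of_continuous hhcont.continuousOn
  rw [Metric.uniformContinuousOn_iff] at huc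
  obtain ⟨δ, hδpos, hδ⟩ := huc (m / 2) (by positivity)
  refine ⟨δ / 2, by positivity, m / 4, M / 2, by positivity, by linarith, ?_⟩
  intro θ hθ θ' hθ' hr
  by_cases heq : θ = θ'
  · subst heq
    constructor
    · simp
    · rw [show ⟪cross3 (γ θ) (deriv γ θ), γ θ⟫ = (0:ℝ) from inner_cross_left _ _]
      simp
  · set g : ℝ → ℝ := fun s => ⟪n θ, γ s⟫ with hg_def
    have hg : ContDiff ℝ 2 g := (innerSL ℝ (n θ)).contDiff.comp hγ
    have hgder : ∀ s, HasDerivAt g ⟪n θ, deriv γ s⟫ s := by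
      intro s
      have := (hasDerivAt_const s (n θ)).inner ℝ (hγd s).hasDerivAt
      simpa using this
    have hderiv_g : deriv g = fun s => ⟪n θ, deriv γ s⟫ := funext fun s => (hgder s).deriv
    have hderiv2 : ∀ s, deriv (deriv g) s = h (θ, s) := by
      intro s
      rw [hderiv_g]
      have := (hasDerivAt_const s (n θ)).inner ℝ (hγ'd s).hasDerivAt
      have h2 : HasDerivAt (fun s => ⟪n θ, deriv γ s⟫) ⟪n θ, deriv (deriv γ) s⟫ s := by
        simpa using this
      exact h2.deriv
    obtain ⟨ξ, hξ, htay⟩ := taylor2 hg heq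
    have hgθ : g θ = 0 := inner_cross_left _ _
    have hg'θ : deriv g θ = 0 := by rw [hderiv_g]; exact inner_cross_right _ _
    rw [hgθ, hg'θ, hderiv2] at htay
    have hgval : g θ' = h (θ, ξ) / 2 * (θ' - θ) ^ 2 := by linarith [htay]
    have hξab : ξ ∈ Icc a b :=
      ⟨(le_min hθ.1 hθ'.1).trans hξ.1.le, hξ.2.le.trans (max_le hθ.2 hθ'.2)⟩
    have hξθ : |ξ - θ| ≤ |θ - θ'| := by
      rcases le_total θ θ' with hc | hc
      · have habs2 : |θ - θ'| = θ' - θ := by rw [abs_of_nonpos] <;> linarith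
        rw [min_eq_left hc, max_eq_right hc] at hξ
        rw [habs2, abs_sub_le_iff]
        exact ⟨by linarith [hξ.2], by linarith [hξ.1]⟩
      · have habs2 : |θ - θ'| = θ - θ' := abs_of_nonneg (by linarith)
        rw [min_eq_right hc, max_eq_left hc] at hξ
        rw [habs2, abs_sub_le_iff]
        exact ⟨by linarith [hξ.2], by linarith [hξ.1]⟩
    have hdist : dist ((θ, ξ) : ℝ × ℝ) (θ, θ) < δ := by
      rw [Prod.dist_eq]
      simp only [dist_self, Real.dist_eq]
      calc max 0 |ξ - θ| ≤ |θ - θ'| := max_le (abs_nonneg _) hξθ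
        _ ≤ δ / 2 := hr
        _ < δ := by linarith
    have hclose := hδ (θ, ξ) ⟨hθ, hξab⟩ (θ, θ) ⟨hθ, hθ⟩ hdist
    rw [Real.dist_eq] at hclose
    have hlow : m / 2 ≤ |h (θ, ξ)| := by
      have h1 := hmle θ hθ
      have h2 := abs_sub_abs_le_abs_sub (h (θ, θ)) (h (θ, ξ))
      rw [abs_sub_comm] at h2
      linarith [hclose, h1, h2]
    have hup : |h (θ, ξ)| ≤ M := hMle (θ, ξ) ⟨hθ, hξab⟩
    have hinner : ⟪cross3 (γ θ) (deriv γ θ), γ θ'⟫ = g θ' := rfl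
    have habs : |⟪cross3 (γ θ) (deriv γ θ), γ θ'⟫| = |h (θ, ξ)| / 2 * (θ - θ') ^ 2 := by
      rw [hinner, hgval, abs_mul, abs_div]
      rw [abs_of_nonneg (sq_nonneg (θ' - θ))]
      rw [show (θ' - θ) ^ 2 = (θ - θ') ^ 2 by ring]
      norm_num
    have hsq : |θ - θ'| ^ 2 = (θ - θ') ^ 2 := sq_abs _
    rw [habs, hsq]
    constructor
    · nlinarith [sq_nonneg (θ - θ')]
    · nlinarith [sq_nonneg (θ - θ')]
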